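/- Let p = 1 and define M_1(n) = S_1(n) / (n · C(2n, n)). Then 1 ≤ M_1(n) for every natural number n ≥ 1, and limsup_{n→∞} M_1(n) ≤ 3. -/

import Mathlib

open Filter

lemma term_eq (n j : ℕ) (hj : 1 ≤ j) :
    j * Nat.choose (n + j) j = (n + 1) * Nat.choose (n + j) (n + 1) := by
  obtain ⟨k, rfl⟩ := Nat.exists_eq_add_of_le hj
  have h1 := Nat.add_one_mul_choose_eq (n + k) k
  have h2 := Nat.add_one_mul_choose_eq (n + k) n
  have hsymm : Nat.choose (n + k) k = Nat.choose (n + k) n := by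
    have h := Nat.choose_symm_add (a := k) (b := n)
    rwa [Nat.add_comm k n] at h
  have e1 : (1 + k) * Nat.choose (n + (1 + k)) (1 + k)
      = (n + k + 1) * Nat.choose (n + k) k := by
    have ha : n + (1 + k) = (n + k) + 1 := by ring
    have hb : 1 + k = k + 1 := by ring
    rw [ha, hb, Nat.mul_comm]; exact h1.symm
  have e2 : (n + 1) * Nat.choose (n + (1 + k)) (n + 1)
      = (n + k + 1) * Nat.choose (n + k) n := by
    have ha : n + (1 + k) = (n + k) + 1 := by ring
    rw [ha, Nat.mul_comm]; exact h2.symm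
  rw [e1, e2, hsymm]

lemma sum_eq (n : ℕ) :
    ∑ j ∈ Finset.Icc 1 n, j * Nat.choose (n + j) j
      = (n + 1) * Nat.choose (2 * n + 1) (n + 2) := by
  have h1 : ∑ j ∈ Finset.Icc 1 n, j * Nat.choose (n + j) j
      = (n + 1) * ∑ j ∈ Finset.Icc 1 n, Nat.choose (n + j) (n + 1) := by
    rw [Finset.mul_sum]
    exact Finset.sum_congr rfl fun j hj =>
      term_eq n j (Finset.mem_Icc.mp hj).1
  have h2 : ∑ j ∈ Finset.Icc 1 n, Nat.choose (n + j) (n + 1)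
      = ∑ i ∈ Finset.Icc (n + 1) (n + n), Nat.choose i (n + 1) := by
    rw [← Finset.map_add_left_Icc 1 n n, Finset.sum_map]
    rfl
  have h3 := Nat.sum_Icc_choose (n + n) (n + 1)
  rw [h1, h2, h3]
  congr 2
  omega

lemma ratio_nat (n : ℕ) :
    (n + 1) * Nat.choose (2 * n + 1) (n + 2) * (n + 2)
      = (2 * n + 1) * (n * Nat.choose (2 * n) n) := by
  have h1 := Nat.add_one_mul_choose_eq (2 * n) (n + 1)
  -- (2n+1) * C(2n, n+1) = C(2n+1, n+2) * (n+2)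
  have h2 := Nat.choose_succ_right_eq (2 * n) n
  -- C(2n, n+1) * (n+1) = C(2n, n) * (2n - n)
  have hsub : 2 * n - n = n := by omega
  rw [hsub] at h2
  calc (n + 1) * Nat.choose (2 * n + 1) (n + 2) * (n + 2)
      = (n + 1) * (Nat.choose (2 * n + 1) (n + 2) * (n + 2)) := by ring
    _ = (n + 1) * ((2 * n + 1) * Nat.choose (2 * n) (n + 1)) := by rw [← h1]
    _ = (2 * n + 1) * (Nat.choose (2 * n) (n + 1) * (n + 1)) := by ring
    _ = (2 * n + 1) * (Nat.choose (2 * n) n * n) := by rw [h2]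
    _ = (2 * n + 1) * (n * Nat.choose (2 * n) n) := by ring

lemma M_formula (M : ℕ → ℝ)
    (hM : ∀ n : ℕ, M n =
      (∑ j ∈ Finset.Icc 1 n, (j : ℝ) * (Nat.choose (n + j) j : ℝ)) /
        ((n : ℝ) * (Nat.choose (2 * n) n : ℝ)))
    (n : ℕ) (hn : 1 ≤ n) :
    M n = (2 * (n : ℝ) + 1) / ((n : ℝ) + 2) := by
  have hsum : (∑ j ∈ Finset.Icc 1 n, (j : ℝ) * (Nat.choose (n + j) j : ℝ))
      = ((∑ j ∈ Finset.Icc 1 n, j * Nat.choose (n + j) j : ℕ) : ℝ) := by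
    push_cast; ring_nf
  have hden : ((n : ℝ) * (Nat.choose (2 * n) n : ℝ)) ≠ 0 := by
    have : 0 < Nat.choose (2 * n) n := Nat.choose_pos (by omega)
    positivity
  have hden2 : ((n : ℝ) + 2) ≠ 0 := by positivity
  rw [hM n, hsum, sum_eq n, div_eq_div_iff hden hden2]
  have := ratio_nat n
  have : (((n + 1) * Nat.choose (2 * n + 1) (n + 2) * (n + 2) : ℕ) : ℝ)
      = (((2 * n + 1) * (n * Nat.choose (2 * n) n) : ℕ) : ℝ) := by
    exact_mod_cast congrArg (Nat.cast : ℕ → ℝ) this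
  push_cast at this ⊢
  linarith [this]

theorem ratio_bounds_p_one
    (M : ℕ → ℝ)
    (hM : ∀ n : ℕ, M n =
      (∑ j ∈ Finset.Icc 1 n, (j : ℝ) * (Nat.choose (n + j) j : ℝ)) /
        ((n : ℝ) * (Nat.choose (2 * n) n : ℝ))) :
    (∀ n : ℕ, 1 ≤ n → 1 ≤ M n) ∧ Filter.limsup M Filter.atTop ≤ 3 := by
  constructor
  · intro n hn
    rw [M_formula M hM n hn]
    rw [le_div_iff₀ (by positivity)]
    have : (1 : ℝ) ≤ n := by exact_mod_cast hn
    linarith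
  · have hev : M =ᶠ[atTop] fun n : ℕ => (2 * (n : ℝ) + 1) / ((n : ℝ) + 2) := by
      filter_upwards [eventually_ge_atTop 1] with n hn
      exact M_formula M hM n hn
    have htend : Tendsto (fun n : ℕ => (2 * (n : ℝ) + 1) / ((n : ℝ) + 2)) atTop (nhds 2) := by
      have heq : (fun n : ℕ => (2 * (n : ℝ) + 1) / ((n : ℝ) + 2))
          = fun n : ℕ => 2 - 3 / ((n : ℝ) + 2) := by
        funext n
        have h2 : ((n : ℝ) + 2) ≠ 0 := by positivity
        field_simp
        ring
      rw [heq]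
      have hg : Tendsto (fun n : ℕ => (n : ℝ) + 2) atTop atTop :=
        tendsto_atTop_add_const_right _ 2 tendsto_natCast_atTop_atTop
      have h0 : Tendsto (fun n : ℕ => 3 / ((n : ℝ) + 2)) atTop (nhds 0) :=
        Filter.Tendsto.div_atTop tendsto_const_nhds hg
      have := (tendsto_const_nhds (x := (2:ℝ)) (f := atTop (α := ℕ))).sub h0
      simpa using this
    calc limsup M atTop = limsup (fun n : ℕ => (2 * (n : ℝ) + 1) / ((n : ℝ) + 2)) atTop :=
          limsup_congr hev
      _ = 2 := htend.limsup_eq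
      _ ≤ 3 := by norm_num
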